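/- arXiv:1403.1004 — 2 statements merged into one kernel-verified Lean document; each statement's English description precedes it below -/
import Mathlib

section
/- For the second-order combined perturbation variable Ĥ := g₂ + 2£_{−X₁} g₁ + £_{−X₁}² g, where g₁, g₂ are tensor fields transforming as g₁^Y − g₁^X = £_{ξ₁} g and g₂^Y − g₂^X = 2£_{ξ₁} g₁^X + (£_{ξ₁}² + £_{ξ₂}) g, and X₁ transforms as X₁^Y − X₁^X = ξ₁, the variable Ĥ transforms as Ĥ^Y − Ĥ^X = £_{σ₂} g with σ₂ = ξ₂ + [ξ₁, X₁^X]. -/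
attribute [local instance 100] LieRing.ofAssociativeRing

/-- Second-order combined perturbation variable: with `L : V →ₗ⁅ℝ⁆ Module.End ℝ T` the
Lie derivative (a Lie algebra morphism, so `L⁅u,v⁆ = L u ∘ L v − L v ∘ L u`), suppose
`g₁, g₂` transform as `g₁^Y − g₁^X = £_{ξ₁} g` and
`g₂^Y − g₂^X = 2£_{ξ₁} g₁^X + (£_{ξ₁}² + £_{ξ₂}) g`, and `X₁^Y − X₁^X = ξ₁`.
Then `Ĥ := g₂ + 2£_{−X₁} g₁ + £_{−X₁}² g` transforms as
`Ĥ^Y − Ĥ^X = £_{σ₂} g` with `σ₂ = ξ₂ + [ξ₁, X₁^X]`. -/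
theorem second_order_hatH_gauge_transformation
    {V T : Type*} [LieRing V] [LieAlgebra ℝ V] [AddCommGroup T] [Module ℝ T]
    (L : V →ₗ⁅ℝ⁆ Module.End ℝ T)
    (g g1X g1Y g2X g2Y : T) (ξ₁ ξ₂ X1X X1Y : V)
    (h1 : g1Y - g1X = L ξ₁ g)
    (h2 : g2Y - g2X = 2 • L ξ₁ g1X + (L ξ₁ (L ξ₁ g) + L ξ₂ g))
    (hX : X1Y - X1X = ξ₁) :
    (g2Y + 2 • L (-X1Y) g1Y + L (-X1Y) (L (-X1Y) g))
        - (g2X + 2 • L (-X1X) g1X + L (-X1X) (L (-X1X) g))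
      = L (ξ₂ + ⁅ξ₁, X1X⁆) g := by
  have hY : X1Y = ξ₁ + X1X := by rw [← hX]; abel
  have hg1 : g1Y = L ξ₁ g + g1X := by rw [← h1]; abel
  have hg2 : g2Y = 2 • L ξ₁ g1X + (L ξ₁ (L ξ₁ g) + L ξ₂ g) + g2X := by rw [← h2]; abel
  subst hY hg1 hg2
  simp only [neg_add, LieHom.map_lie, Ring.lie_def,
    LinearMap.sub_apply, Module.End.mul_apply, LinearMap.add_apply, LinearMap.neg_apply,
    map_add, map_neg, map_smul, smul_add, smul_sub, smul_neg]
  abel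
end

section
/- The second-order gauge-invariant matter perturbation Q₂^{inv} := Q₂ + 2£_{−X₁}Q₁ + (£_{−X₂} + £_{−X₁}²)Q₀ is gauge-invariant, given the transformation rules Q₂^Y − Q₂^X = 2£_{ξ₁}Q₁^X + (£_{ξ₁}² + £_{ξ₂})Q₀, Q₁^Y − Q₁^X = £_{ξ₁}Q₀, X₁^Y − X₁^X = ξ₁, and X₂^Y − X₂^X = ξ₂ + [ξ₁, X₁^X]. -/
attribute [local instance] LieRing.ofAssociativeRing

/-- Second-order gauge-invariant matter perturbation: with `L : V →ₗ⁅ℝ⁆ Module.End ℝ T`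
the Lie derivative (so `L⁅u,v⁆ = L u ∘ L v − L v ∘ L u`), given the transformation rules
`Q₂^Y − Q₂^X = 2£_{ξ₁}Q₁^X + (£_{ξ₁}² + £_{ξ₂})Q₀`, `Q₁^Y − Q₁^X = £_{ξ₁}Q₀`,
`X₁^Y − X₁^X = ξ₁`, and `X₂^Y − X₂^X = ξ₂ + [ξ₁, X₁^X]`, the quantity
`Q₂^{inv} := Q₂ + 2£_{−X₁}Q₁ + (£_{−X₂} + £_{−X₁}²)Q₀` is gauge-invariant. -/
theorem second_order_matter_gauge_invariant
    {V T : Type*} [LieRing V] [LieAlgebra ℝ V] [AddCommGroup T] [Module ℝ T]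
    (L : V →ₗ⁅ℝ⁆ Module.End ℝ T)
    (Q0 Q1X Q1Y Q2X Q2Y : T) (ξ₁ ξ₂ X1X X1Y X2X X2Y : V)
    (hQ2 : Q2Y - Q2X = 2 • L ξ₁ Q1X + (L ξ₁ (L ξ₁ Q0) + L ξ₂ Q0))
    (hQ1 : Q1Y - Q1X = L ξ₁ Q0)
    (hX1 : X1Y - X1X = ξ₁)
    (hX2 : X2Y - X2X = ξ₂ + ⁅ξ₁, X1X⁆) :
    Q2Y + 2 • L (-X1Y) Q1Y + (L (-X2Y) Q0 + L (-X1Y) (L (-X1Y) Q0))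
      = Q2X + 2 • L (-X1X) Q1X + (L (-X2X) Q0 + L (-X1X) (L (-X1X) Q0)) := by
  have eQ2 : Q2Y = Q2X + (2 • L ξ₁ Q1X + (L ξ₁ (L ξ₁ Q0) + L ξ₂ Q0)) := by
    rw [← hQ2]; abel
  have eQ1 : Q1Y = Q1X + L ξ₁ Q0 := by rw [← hQ1]; abel
  have eX1 : X1Y = X1X + ξ₁ := by rw [← hX1]; abel
  have eX2 : X2Y = X2X + (ξ₂ + ⁅ξ₁, X1X⁆) := by rw [← hX2]; abel
  have hbr : L ⁅ξ₁, X1X⁆ Q0 = L ξ₁ (L X1X Q0) - L X1X (L ξ₁ Q0) := by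
    rw [LieHom.map_lie]; rfl
  subst eQ2 eQ1 eX1 eX2
  simp only [neg_add_rev, map_add, map_neg, map_add, map_neg, map_smul, LinearMap.add_apply, LinearMap.neg_apply,
    map_sub, LinearMap.sub_apply, hbr, smul_add, smul_neg, smul_sub, two_smul, neg_one_smul]
  abel
end
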